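/- Let p ≥ 2 be even and define B_{P₄} ⊆ (A_p)⁴ as the set of quadruples (J¹, J², J³, J⁴) such that all four multisets pairwise intersect in a connected pattern (S_{J¹} ∩ S_{J²} ∩ S_{J³} ∩ S_{J⁴} ≠ ∅ in the sense that the quadruple is connected) and every element of S_{J¹} ∪ S_{J²} ∪ S_{J³} ∪ S_{J⁴} has multiplicity ≥ 2. Then |B_{P₄}| = o(b_n^{2p−2}) as b_n → ∞. -/

import Mathlib

open Finset Filter

-- §1: coordinate projection lemma
lemma proj_coords {ι : Type*} [Fintype ι] [DecidableEq ι] :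
    ∀ (n : ℕ) (K : Submodule ℚ (ι → ℚ)), Module.finrank ℚ K ≤ n →
    ∃ S : Finset ι, S.card ≤ n ∧ ∀ x ∈ K, (∀ i ∈ S, x i = 0) → x = 0 := by
  intro n
  induction n with
  | zero =>
    intro K h
    refine ⟨∅, le_rfl, ?_⟩
    have hK : K = ⊥ := Submodule.finrank_eq_zero.mp (Nat.le_zero.mp h)
    intro x hx _
    simpa [hK] using hx
  | succ n ih =>
    intro K h
    by_cases hK : K = ⊥
    · refine ⟨∅, Nat.zero_le _, ?_⟩
      intro x hx _
      simpa [hK] using hx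
    · obtain ⟨x, hxK, hx0⟩ := Submodule.exists_mem_ne_zero_of_ne_bot hK
      obtain ⟨i₀, hi₀⟩ := Function.ne_iff.mp hx0
      set K' : Submodule ℚ (ι → ℚ) := K ⊓ LinearMap.ker (LinearMap.proj (R := ℚ) (φ := fun _ : ι => ℚ) i₀) with hK'def
      have hlt : K' < K := by
        refine lt_of_le_of_ne inf_le_left ?_
        intro he
        have : x ∈ K' := he ▸ hxK
        exact hi₀ (by simpa using this.2)
      have hfr : Module.finrank ℚ K' < Module.finrank ℚ K :=
        Submodule.finrank_lt_finrank_of_lt hlt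
      obtain ⟨S, hSc, hS⟩ := ih K' (by omega)
      refine ⟨insert i₀ S, (Finset.card_insert_le _ _).trans (by omega), ?_⟩
      intro y hy hyz
      have hy0 : y i₀ = 0 := hyz i₀ (Finset.mem_insert_self _ _)
      have hyK' : y ∈ K' := ⟨hy, by simpa using hy0⟩
      exact hS y hyK' fun i hi => hyz i (Finset.mem_insert_of_mem hi)

-- §2: kernel dimension bound via independent columns
lemma ker_dim_bound {ι : Type*} [Fintype ι] [DecidableEq ι]
    (M : Matrix (Fin 4) ι ℚ) (r : ℕ) (fam : Fin r → (Fin 4 → ℚ))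
    (hind : LinearIndependent ℚ fam)
    (hmem : ∀ i, fam i ∈ LinearMap.range M.mulVecLin) :
    Module.finrank ℚ (LinearMap.ker M.mulVecLin) + r ≤ Fintype.card ι := by
  have h1 : Module.finrank ℚ (LinearMap.range M.mulVecLin)
      + Module.finrank ℚ (LinearMap.ker M.mulVecLin) = Fintype.card ι := by
    rw [LinearMap.finrank_range_add_finrank_ker]
    simp [Module.finrank_pi]
  have h2 : r ≤ Module.finrank ℚ (LinearMap.range M.mulVecLin) := by
    have hspan : Submodule.span ℚ (Set.range fam) ≤ LinearMap.range M.mulVecLin := by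
      rw [Submodule.span_le]
      rintro _ ⟨i, rfl⟩
      exact hmem i
    have := finrank_span_eq_card hind
    calc r = Module.finrank ℚ (Submodule.span ℚ (Set.range fam)) := by
            rw [this]; simp
      _ ≤ _ := Submodule.finrank_mono hspan
  omega

section Cuts
variable (V : Finset ℤ) (Rv : ℤ → Finset (Fin 4))
variable (Hconn : ∀ s : Finset (Fin 4), s.Nonempty → s ≠ univ →
    ∃ v ∈ V, (Rv v ∩ s).Nonempty ∧ ((Rv v) \ s).Nonempty)

include Hconn in
lemma no_conn_sub (T : Finset (Fin 4)) (hT : T.Nonempty) (hTu : T ≠ univ)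
    (hR : ∀ v ∈ V, (Rv v).card ≤ 1 ∨ Rv v ⊆ T) : False := by
  obtain ⟨v, hv, ⟨a, ha⟩, ⟨b, hb⟩⟩ := Hconn T hT hTu
  rw [Finset.mem_inter] at ha
  rw [Finset.mem_sdiff] at hb
  rcases hR v hv with h | h
  · have : a ≠ b := fun he => hb.2 (he ▸ ha.2)
    have : 1 < (Rv v).card := Finset.one_lt_card.mpr ⟨a, ha.1, b, hb.1, this⟩
    omega
  · exact hb.2 (h hb.1)

include Hconn in
lemma no_conn_pair2 (P1 P2 : Finset (Fin 4)) (h1 : P1.card = 2) (h2 : P2.card ≤ 2)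
    (hR : ∀ v ∈ V, (Rv v).card ≤ 1 ∨ Rv v ⊆ P1 ∨ Rv v ⊆ P2) : False := by
  by_cases hU : P1 ∪ P2 = univ
  · have hcard : P1.card + P2.card = 4 + (P1 ∩ P2).card := by
      have := Finset.card_union_add_card_inter P1 P2
      rw [hU] at this
      simpa [Fintype.card_fin] using this.symm
    have hdisj : P1 ∩ P2 = ∅ := Finset.card_eq_zero.mp (by omega)
    have hP1u : P1 ≠ univ := fun he => by
      rw [he] at h1; simp [Fintype.card_fin] at h1
    obtain ⟨v, hv, ⟨a, ha⟩, ⟨b, hb⟩⟩ := Hconn P1 (Finset.card_pos.mp (by omega)) hP1u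
    rw [Finset.mem_inter] at ha
    rw [Finset.mem_sdiff] at hb
    rcases hR v hv with h | h | h
    · have hne : a ≠ b := fun he => hb.2 (he ▸ ha.2)
      have : 1 < (Rv v).card := Finset.one_lt_card.mpr ⟨a, ha.1, b, hb.1, hne⟩
      omega
    · exact hb.2 (h hb.1)
    · have : a ∈ P1 ∩ P2 := Finset.mem_inter.mpr ⟨ha.2, h ha.1⟩
      simp [hdisj] at this
  · have hss : P1 ∪ P2 ⊂ univ := (Finset.subset_univ _).ssubset_of_ne hU
    obtain ⟨y, _, hy⟩ := Finset.exists_of_ssubset hss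
    set s : Finset (Fin 4) := univ \ (P1 ∪ P2) with hs
    have hsne : s.Nonempty := ⟨y, by simp [hs, hy]⟩
    have hP1ne : P1.Nonempty := Finset.card_pos.mp (by omega)
    obtain ⟨c, hc⟩ := hP1ne
    have hsu : s ≠ univ := by
      intro he
      have : c ∈ s := he ▸ Finset.mem_univ c
      simp [hs] at this
      exact this.1 hc
    obtain ⟨v, hv, ⟨a, ha⟩, ⟨b, hb⟩⟩ := Hconn s hsne hsu
    rw [Finset.mem_inter] at ha
    rw [Finset.mem_sdiff] at hb
    have hain : a ∈ s := ha.2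
    simp only [hs, Finset.mem_sdiff, Finset.mem_univ, true_and, Finset.mem_union] at hain
    rcases hR v hv with h | h | h
    · have hne : a ≠ b := fun he => hb.2 (he ▸ ha.2)
      have : 1 < (Rv v).card := Finset.one_lt_card.mpr ⟨a, ha.1, b, hb.1, hne⟩
      omega
    · exact hain (Or.inl (h ha.1))
    · exact hain (Or.inr (h ha.1))
end Cuts

lemma exists_det_coords (p : ℕ) (hp : 2 ≤ p) (hpe : Even p)
    (J₀ : Fin 4 → Fin p → ℤ)
    (h3 : ∀ s : Finset (Fin 4), s.Nonempty → s ≠ Finset.univ →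
          ∃ m ∈ s, ∃ m' ∈ Finset.univ \ s, ∃ (k l : Fin p), J₀ m k = J₀ m' l)
    (h4 : ∀ v : ℤ,
        (∑ m : Fin 4, (Finset.univ.filter (fun k : Fin p => J₀ m k = v)).card) = 0 ∨
        2 ≤ ∑ m : Fin 4, (Finset.univ.filter (fun k : Fin p => J₀ m k = v)).card) :
    ∃ u : Fin (2*p - 3) → Fin 4 × Fin p,
      ∀ J J' : Fin 4 → Fin p → ℤ,
        (∀ m, (∑ k : Fin p, (-1 : ℤ) ^ ((k : ℕ) + 1) * J m k) = 0) →
        (∀ m, (∑ k : Fin p, (-1 : ℤ) ^ ((k : ℕ) + 1) * J' m k) = 0) →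
        (∀ a b : Fin 4 × Fin p, (J a.1 a.2 = J b.1 b.2 ↔ J₀ a.1 a.2 = J₀ b.1 b.2)) →
        (∀ a b : Fin 4 × Fin p, (J' a.1 a.2 = J' b.1 b.2 ↔ J₀ a.1 a.2 = J₀ b.1 b.2)) →
        (∀ i, J (u i).1 (u i).2 = J' (u i).1 (u i).2) → J = J' := by
  classical
  set V : Finset ℤ := Finset.image (fun a : Fin 4 × Fin p => J₀ a.1 a.2) univ with hVdef
  set cnt : Fin 4 → ℤ → ℕ :=
    fun m v => (univ.filter (fun k : Fin p => J₀ m k = v)).card with hcnt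
  set sgn : Fin 4 → ℤ → ℤ :=
    fun m v => ∑ k ∈ univ.filter (fun k : Fin p => J₀ m k = v), (-1 : ℤ)^((k:ℕ)+1) with hsgn
  set Sz : ℤ → ℕ := fun v => ∑ m : Fin 4, cnt m v with hSz
  set Rv : ℤ → Finset (Fin 4) := fun v => univ.filter (fun m => 0 < cnt m v) with hRv
  have hmemV : ∀ m k, J₀ m k ∈ V := fun m k =>
    Finset.mem_image.mpr ⟨(m, k), Finset.mem_univ _, rfl⟩
  -- multiplicity ≥ 2
  have f_mult : ∀ v ∈ V, 2 ≤ Sz v := by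
    intro v hv
    rw [hVdef] at hv
    obtain ⟨a, -, ha⟩ := Finset.mem_image.mp hv
    have hposk : a.2 ∈ univ.filter (fun k : Fin p => J₀ a.1 k = v) := by simp [ha]
    have h1 : 0 < (univ.filter (fun k : Fin p => J₀ a.1 k = v)).card :=
      Finset.card_pos.mpr ⟨a.2, hposk⟩
    have h2 : 0 < ∑ m : Fin 4, (univ.filter (fun k : Fin p => J₀ m k = v)).card :=
      lt_of_lt_of_le h1 (Finset.single_le_sum (f := fun m => (univ.filter (fun k : Fin p => J₀ m k = v)).card) (fun _ _ => Nat.zero_le _) (Finset.mem_univ a.1))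
    have h5 := h4 v
    rw [hSz]; simp only [hcnt]
    omega
  -- row counts sum to p
  have f_rowsum : ∀ m, ∑ v ∈ V, cnt m v = p := by
    intro m
    simp only [hcnt]
    rw [← Finset.card_eq_sum_card_fiberwise (fun k _ => hmemV m k)]
    simp
  -- total size
  have f_total : ∑ v ∈ V, Sz v = 4 * p := by
    simp only [hSz]
    rw [Finset.sum_comm]
    simp [f_rowsum]
  -- |sgn| ≤ cnt
  have f_abs : ∀ m v, |sgn m v| ≤ (cnt m v : ℤ) := by
    intro m v
    simp only [hsgn, hcnt]
    calc |∑ k ∈ univ.filter (fun k : Fin p => J₀ m k = v), (-1 : ℤ)^((k:ℕ)+1)|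
        ≤ ∑ k ∈ univ.filter (fun k : Fin p => J₀ m k = v), |(-1 : ℤ)^((k:ℕ)+1)| :=
          Finset.abs_sum_le_sum_abs _ _
      _ = (cnt m v : ℤ) := by
          rw [hcnt]
          simp [abs_pow]
  -- parity
  have f_par : ∀ m v, (2 : ℤ) ∣ ((cnt m v : ℤ) - sgn m v) := by
    intro m v
    simp only [hsgn, hcnt]
    rw [Finset.card_eq_sum_ones]
    push_cast
    rw [← Finset.sum_sub_distrib]
    apply Finset.dvd_sum
    intro k _
    rcases Nat.even_or_odd ((k : ℕ) + 1) with he | ho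
    · rw [he.neg_one_pow]; norm_num
    · rw [ho.neg_one_pow]; norm_num
  -- cnt zero => sgn zero
  have f_cnt0 : ∀ m v, cnt m v = 0 → sgn m v = 0 := by
    intro m v h
    simp only [hcnt] at h
    rw [Finset.card_eq_zero] at h
    simp only [hsgn, h, Finset.sum_empty]
  -- Rv members
  have f_Rv : ∀ m v, m ∈ Rv v ↔ 0 < cnt m v := by
    intro m v; simp [hRv]
  -- Sz as sum over Rv
  have f_RS : ∀ v, ∑ m ∈ Rv v, cnt m v = Sz v := by
    intro v
    rw [hSz]
    apply Finset.sum_subset (Finset.subset_univ _)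
    intro m _ hm
    rw [f_Rv] at hm
    omega
  have f_cardR : ∀ v, (Rv v).card ≤ Sz v := by
    intro v
    rw [← f_RS v]
    calc (Rv v).card = ∑ m ∈ Rv v, 1 := by simp
      _ ≤ ∑ m ∈ Rv v, cnt m v := Finset.sum_le_sum (fun m hm => (f_Rv m v).mp hm)
  -- connectivity
  have f_conn : ∀ s : Finset (Fin 4), s.Nonempty → s ≠ univ →
      ∃ v ∈ V, (Rv v ∩ s).Nonempty ∧ ((Rv v) \ s).Nonempty := by
    intro s hs hsu
    obtain ⟨m, hm, m', hm', k, l, hkl⟩ := h3 s hs hsu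
    refine ⟨J₀ m k, hmemV m k, ⟨m, ?_⟩, ⟨m', ?_⟩⟩
    · rw [Finset.mem_inter, f_Rv]
      refine ⟨Finset.card_pos.mpr ⟨k, ?_⟩, hm⟩
      simp [hcnt]
    · rw [Finset.mem_sdiff, f_Rv]
      rw [Finset.mem_sdiff] at hm'
      refine ⟨Finset.card_pos.mpr ⟨l, ?_⟩, hm'.2⟩
      simp [hcnt, hkl]
  -- the matrix
  set Mx : Matrix (Fin 4) {x // x ∈ V} ℚ := fun m i => (sgn m i.1 : ℚ) with hMx
  -- main combinatorial input
  obtain ⟨r, fam, hind, hmem, hcard⟩ :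
      ∃ (r : ℕ) (fam : Fin r → (Fin 4 → ℚ)), LinearIndependent ℚ fam ∧
        (∀ i, fam i ∈ LinearMap.range Mx.mulVecLin) ∧ V.card ≤ 2*p - 3 + r := by
    have huniv4 : (univ : Finset (Fin 4)).card = 4 := by simp
    have t4 : 2 * V.card ≤ 4 * p := by
      calc 2 * V.card = ∑ _v ∈ V, 2 := by rw [Finset.sum_const, smul_eq_mul, mul_comm]
        _ ≤ ∑ v ∈ V, Sz v := Finset.sum_le_sum f_mult
        _ = 4 * p := f_total
    have hVsumZ : ∑ v ∈ V, ((Sz v : ℤ) - 2) = 4*(p:ℤ) - 2*V.card := by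
      rw [Finset.sum_sub_distrib, Finset.sum_const, nsmul_eq_mul]
      have h1 : ((∑ v ∈ V, Sz v : ℕ) : ℤ) = ((4*p : ℕ) : ℤ) := by
        exact_mod_cast congrArg (Nat.cast (R := ℤ)) f_total
      push_cast at h1 ⊢
      linarith
    have f_exc : ∀ W, W ⊆ V → ∑ v ∈ W, ((Sz v : ℤ) - 2) ≤ 4*(p:ℤ) - 2*V.card := by
      intro W hW
      rw [← hVsumZ]
      apply Finset.sum_le_sum_of_subset_of_nonneg hW
      intro v hv _
      have := f_mult v hv
      omega
    have f_exc1 : ∀ v ∈ V, (Sz v : ℤ) - 2 ≤ 4*(p:ℤ) - 2*V.card := by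
      intro v hv
      simpa using f_exc {v} (by simpa using hv)
    have f_exc2 : ∀ v1 ∈ V, ∀ v2 ∈ V, v1 ≠ v2 →
        ((Sz v1 : ℤ) - 2) + ((Sz v2 : ℤ) - 2) ≤ 4*(p:ℤ) - 2*V.card := by
      intro v1 h1 v2 h2 hne
      have hs := f_exc {v1, v2} (by
        intro x hx
        rcases Finset.mem_insert.mp hx with rfl | hx
        · exact h1
        · rw [Finset.mem_singleton] at hx; exact hx ▸ h2)
      rwa [Finset.sum_pair hne] at hs
    have f_exc3 : ∀ v1 ∈ V, ∀ v2 ∈ V, ∀ v3 ∈ V, v1 ≠ v2 → v1 ≠ v3 → v2 ≠ v3 →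
        ((Sz v1 : ℤ) - 2) + ((Sz v2 : ℤ) - 2) + ((Sz v3 : ℤ) - 2) ≤ 4*(p:ℤ) - 2*V.card := by
      intro v1 h1 v2 h2 v3 h3' hne12 hne13 hne23
      have hs := f_exc {v1, v2, v3} (by
        intro x hx
        simp only [Finset.mem_insert, Finset.mem_singleton] at hx
        rcases hx with rfl | rfl | rfl <;> assumption)
      rw [Finset.sum_insert (by simp [hne12, hne13]), Finset.sum_pair hne23] at hs
      linarith
    have c_cross2 : ∀ {v : ℤ} {s : Finset (Fin 4)},
        (Rv v ∩ s).Nonempty → ((Rv v) \ s).Nonempty → 2 ≤ (Rv v).card := by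
      rintro v s ⟨a, ha⟩ ⟨b, hb⟩
      rw [Finset.mem_inter] at ha
      rw [Finset.mem_sdiff] at hb
      exact Finset.one_lt_card.mpr ⟨a, ha.1, b, hb.1, fun h => hb.2 (h ▸ ha.2)⟩
    have c_sgn0_cnt : ∀ m v, m ∈ Rv v → sgn m v = 0 → 2 ≤ cnt m v := by
      intro m v hm h0
      have hpar := f_par m v
      rw [h0, sub_zero] at hpar
      have hpos := (f_Rv m v).mp hm
      omega
    have c_allzero : ∀ v, (∀ m, sgn m v = 0) → 2 * (Rv v).card ≤ Sz v := by
      intro v h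
      rw [← f_RS v]
      calc 2 * (Rv v).card = ∑ _m ∈ Rv v, 2 := by rw [Finset.sum_const, smul_eq_mul, mul_comm]
        _ ≤ ∑ m ∈ Rv v, cnt m v := Finset.sum_le_sum (fun m hm => c_sgn0_cnt m v hm (h m))
    have c_cnt1_sgn : ∀ m v, cnt m v = 1 → sgn m v ≠ 0 := by
      intro m v h1 h0
      have hpar := f_par m v
      rw [h0, h1, sub_zero] at hpar
      omega
    have c_cardR4 : ∀ v, (Rv v).card ≤ 4 := fun v => by
      calc (Rv v).card ≤ (univ : Finset (Fin 4)).card := Finset.card_le_univ _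
        _ = 4 := huniv4
    set colQ : ℤ → (Fin 4 → ℚ) := fun v m => (sgn m v : ℚ) with hcolQ
    have c_colmem : ∀ v, v ∈ V → colQ v ∈ LinearMap.range Mx.mulVecLin := by
      intro v hv
      refine ⟨Pi.single ⟨v, hv⟩ 1, ?_⟩
      rw [Matrix.mulVecLin_apply, Matrix.mulVec_single]
      funext m
      rw [MulOpposite.op_one, one_smul]; rfl
    have c_colne : ∀ m v, colQ v m = 0 ↔ sgn m v = 0 := by
      intro m v
      have hh : colQ v m = ((sgn m v : ℚ)) := by rw [hcolQ]
      rw [hh]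
      exact Int.cast_eq_zero
    have c_colzero : ∀ v, colQ v = 0 ↔ ∀ m, sgn m v = 0 := by
      intro v
      constructor
      · intro h m
        rw [← c_colne m v, h]
        rfl
      · intro h
        funext m
        rw [show (0 : Fin 4 → ℚ) m = 0 from rfl, c_colne m v]
        exact h m
    have h0ne : ({0} : Finset (Fin 4)).Nonempty := ⟨0, Finset.mem_singleton_self 0⟩
    have h0nu : ({0} : Finset (Fin 4)) ≠ univ := by
      intro h
      have h' := congrArg Finset.card h
      rw [huniv4] at h'
      simp at h'
    have allzero_contra : (∀ v ∈ V, 2 ≤ (Rv v).card → (∀ m, sgn m v = 0)) →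
        4*(p:ℤ) - 2*(V.card : ℤ) ≤ 4 → False := by
      intro hall hE
      obtain ⟨v1, hv1, hi1, hd1⟩ := f_conn {0} h0ne h0nu
      have hcr1 : 2 ≤ (Rv v1).card := c_cross2 hi1 hd1
      have hsz1 : 2 * (Rv v1).card ≤ Sz v1 := c_allzero v1 (hall v1 hv1 hcr1)
      have hexc1 := f_exc1 v1 hv1
      have hm4 := c_cardR4 v1
      have hcard1 : (Rv v1).card ≤ 3 := by omega
      by_cases h2c : ∃ v2 ∈ V, 2 ≤ (Rv v2).card ∧ v2 ≠ v1
      · obtain ⟨v2, hv2, hcr2, hne⟩ := h2c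
        have hsz2 : 2 * (Rv v2).card ≤ Sz v2 := c_allzero v2 (hall v2 hv2 hcr2)
        have hexc12 := f_exc2 v2 hv2 v1 hv1 hne
        have hc1 : (Rv v1).card = 2 := by omega
        have hc2 : (Rv v2).card = 2 := by omega
        refine no_conn_pair2 V Rv f_conn (Rv v1) (Rv v2) hc1 (le_of_eq hc2) ?_
        intro v hv
        by_cases hc : 2 ≤ (Rv v).card
        · have hv12 : v = v1 ∨ v = v2 := by
            by_contra hvno
            push_neg at hvno
            have hszv : 2 * (Rv v).card ≤ Sz v := c_allzero v (hall v hv hc)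
            have := f_exc3 v hv v1 hv1 v2 hv2 hvno.1 hvno.2 hne.symm
            omega
          rcases hv12 with rfl | rfl
          · right; left; exact Finset.Subset.refl _
          · right; right; exact Finset.Subset.refl _
        · left; omega
      · push_neg at h2c
        refine no_conn_sub V Rv f_conn (Rv v1) (Finset.card_pos.mp (by omega)) ?_ ?_
        · intro he
          rw [he, huniv4] at hcard1
          omega
        · intro v hv
          by_cases hc : 2 ≤ (Rv v).card
          · right
            rw [h2c v hv hc]
          · left; omega
    rcases (show V.card ≤ 2*p - 3 ∨ V.card = 2*p - 2 ∨ V.card = 2*p - 1 ∨ V.card = 2*p by omega)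
      with ht | ht | ht | ht
    · exact ⟨0, Fin.elim0, linearIndependent_empty_type, fun i => i.elim0, by omega⟩
    · -- t = 2p - 2 : need one nonzero column
      by_cases hz : ∃ v ∈ V, colQ v ≠ 0
      · obtain ⟨v, hv, hvne⟩ := hz
        refine ⟨1, ![colQ v], ?_, ?_, by omega⟩
        · rw [linearIndependent_unique_iff]
          simpa using hvne
        · intro i
          fin_cases i
          simpa using c_colmem v hv
      · push_neg at hz
        exfalso
        apply allzero_contra
        · intro v hv _ m
          exact (c_colzero v).mp (hz v hv) m
        · omega
    · -- t = 2p - 1 : need two independent columns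
      have hbud : 4*(p:ℤ) - 2*(V.card:ℤ) = 2 := by omega
      have c_pair1 : ∀ v, Sz v = 2 → (Rv v).card = 2 → ∀ m ∈ Rv v, cnt m v = 1 := by
        intro v hsz hc m hm
        have h1 : 1 ≤ cnt m v := (f_Rv m v).mp hm
        have hsum : ∑ m' ∈ Rv v, cnt m' v = 2 := by rw [f_RS v, hsz]
        rw [← Finset.add_sum_erase _ _ hm] at hsum
        have hcarde : ((Rv v).erase m).card = 1 := by
          rw [Finset.card_erase_of_mem hm, hc]
        have herase : 1 ≤ ∑ m' ∈ (Rv v).erase m, cnt m' v := by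
          calc 1 = ∑ _m' ∈ (Rv v).erase m, 1 := by rw [Finset.sum_const, hcarde]; simp
            _ ≤ _ := Finset.sum_le_sum
                (fun m' hm' => (f_Rv m' v).mp (Finset.mem_of_mem_erase hm'))
        omega
      suffices h2i : ∃ v1 ∈ V, ∃ v2 ∈ V, LinearIndependent ℚ ![colQ v1, colQ v2] by
        obtain ⟨v1, hv1, v2, hv2, hind⟩ := h2i
        refine ⟨2, ![colQ v1, colQ v2], hind, ?_, by omega⟩
        intro i
        fin_cases i
        · simpa using c_colmem v1 hv1
        · simpa using c_colmem v2 hv2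
      by_contra hno
      push_neg at hno
      by_cases hz : ∀ v ∈ V, 2 ≤ (Rv v).card → colQ v = 0
      · exact allzero_contra (fun v hv hc => (c_colzero v).mp (hz v hv hc)) (by omega)
      push_neg at hz
      obtain ⟨vs, hvs, hcrs, hcs⟩ := hz
      have hdep : ∀ v ∈ V, ∃ lam : ℚ, lam • colQ vs = colQ v := by
        intro v hv
        have hni := hno v hv vs hvs
        rw [linearIndependent_fin2] at hni
        push_neg at hni
        simp only [Matrix.cons_val_one, Matrix.head_cons, Matrix.cons_val_zero] at hni
        exact hni hcs
      set Sf : Finset (Fin 4) := univ.filter (fun m => colQ vs m ≠ 0) with hSfdef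
      have hSfne : Sf.Nonempty := by
        rw [hSfdef, Finset.filter_nonempty_iff]
        by_contra hempty
        push_neg at hempty
        exact hcs (funext fun m => hempty m (Finset.mem_univ m))
      have hsupp : ∀ v ∈ V, colQ v ≠ 0 → ∀ m, (colQ v m ≠ 0 ↔ m ∈ Sf) := by
        intro v hv hvne m
        obtain ⟨lam, hlam⟩ := hdep v hv
        have hlamne : lam ≠ 0 := by
          rintro rfl
          rw [zero_smul] at hlam
          exact hvne hlam.symm
        have hcm : colQ v m = lam * colQ vs m := by rw [← hlam]; simp
        rw [hSfdef]
        simp only [Finset.mem_filter, Finset.mem_univ, true_and]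
        rw [hcm]
        constructor
        · intro h hc
          exact h (by rw [hc, mul_zero])
        · intro h hc
          rcases mul_eq_zero.mp hc with h' | h'
          · exact hlamne h'
          · exact h h'
      have hgrow : ∀ v ∈ V, 2 ≤ (Rv v).card → colQ v ≠ 0 →
          Sf ⊆ Rv v ∧ 2*(Rv v).card ≤ Sz v + Sf.card := by
        intro v hv hcc hvne
        have hsub : Sf ⊆ Rv v := by
          intro m hm
          have h1 : colQ v m ≠ 0 := (hsupp v hv hvne m).mpr hm
          rw [Ne, c_colne] at h1
          rw [f_Rv]
          by_contra h0
          exact h1 (f_cnt0 m v (by omega))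
        refine ⟨hsub, ?_⟩
        have hsplit : ∑ m ∈ Rv v ∩ Sf, cnt m v + ∑ m ∈ Rv v \ Sf, cnt m v
            = ∑ m ∈ Rv v, cnt m v := Finset.sum_inter_add_sum_sdiff _ _ _
        have hRS := f_RS v
        have hi : Rv v ∩ Sf = Sf := Finset.inter_eq_right.mpr hsub
        have hb1 : Sf.card ≤ ∑ m ∈ Rv v ∩ Sf, cnt m v := by
          rw [hi]
          calc Sf.card = ∑ _m ∈ Sf, 1 := by rw [Finset.sum_const]; simp
            _ ≤ _ := Finset.sum_le_sum (fun m hm => (f_Rv m v).mp (hsub hm))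
        have hb2 : 2 * (Rv v \ Sf).card ≤ ∑ m ∈ Rv v \ Sf, cnt m v := by
          calc 2 * (Rv v \ Sf).card = ∑ _m ∈ Rv v \ Sf, 2 := by
                rw [Finset.sum_const, smul_eq_mul, mul_comm]
            _ ≤ _ := Finset.sum_le_sum (fun m hm => by
                rw [Finset.mem_sdiff] at hm
                apply c_sgn0_cnt m v hm.1
                by_contra hs0
                exact hm.2 ((hsupp v hv hvne m).mp (by rwa [Ne, c_colne])))
        have hcardd : (Rv v \ Sf).card = (Rv v).card - Sf.card := Finset.card_sdiff_of_subset hsub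
        have hcle := Finset.card_le_card hsub
        omega
      by_cases hheavy : ∃ h ∈ V, 2 ≤ (Rv h).card ∧ colQ h = 0
      · -- a heavy class: double pair on two rows; everything else is an edge on Sf
        obtain ⟨hh, hhV, hcrh, hch⟩ := hheavy
        have hallz : ∀ m, sgn m hh = 0 := (c_colzero hh).mp hch
        have hszh : 2 * (Rv hh).card ≤ Sz hh := c_allzero hh hallz
        have hexh := f_exc1 hh hhV
        have hRh : (Rv hh).card = 2 := by omega
        have hothers : ∀ v ∈ V, v ≠ hh → Sz v = 2 := by
          intro v hv hne
          have h1 := f_exc2 v hv hh hhV hne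
          have h2 := f_mult v hv
          omega
        have hedge : ∀ v ∈ V, v ≠ hh → 2 ≤ (Rv v).card → Rv v = Sf := by
          intro v hv hne hcc
          have hvsz := hothers v hv hne
          have hvne : colQ v ≠ 0 := by
            intro h0
            have := c_allzero v ((c_colzero v).mp h0)
            omega
          have hc2' : (Rv v).card = 2 := le_antisymm (hvsz ▸ f_cardR v) hcc
          apply Finset.Subset.antisymm
          · intro m hm
            have hcnt1 : cnt m v = 1 := c_pair1 v hvsz hc2' m hm
            have hsne : sgn m v ≠ 0 := c_cnt1_sgn m v hcnt1
            exact (hsupp v hv hvne m).mp (by rwa [Ne, c_colne])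
          · exact (hgrow v hv hcc hvne).1
        by_cases hc2 : ∃ v2 ∈ V, v2 ≠ hh ∧ 2 ≤ (Rv v2).card
        · obtain ⟨v2, hv2, hne2, hcr2⟩ := hc2
          have hc2' : (Rv v2).card = 2 :=
            le_antisymm ((hothers v2 hv2 hne2) ▸ f_cardR v2) hcr2
          apply no_conn_pair2 V Rv f_conn (Rv hh) (Rv v2) hRh (le_of_eq hc2')
          intro v hv
          by_cases hcc : 2 ≤ (Rv v).card
          · by_cases hvh : v = hh
            · right; left; rw [hvh]
            · right; right
              rw [hedge v hv hvh hcc, ← hedge v2 hv2 hne2 hcr2]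
          · left; omega
        · push_neg at hc2
          apply no_conn_sub V Rv f_conn (Rv hh) (Finset.card_pos.mp (by omega))
            (by intro he; rw [he, huniv4] at hRh; omega)
          intro v hv
          by_cases hvh : v = hh
          · right; rw [hvh]
          · left
            have := hc2 v hv hvh
            omega
      · -- no heavy class: all cross columns nonzero, support Sf
        push_neg at hheavy
        have hcrossne : ∀ v ∈ V, 2 ≤ (Rv v).card → colQ v ≠ 0 := fun v hv hc => hheavy v hv hc
        have hsc4 : Sf.card ≤ 4 := by
          calc Sf.card ≤ (univ : Finset (Fin 4)).card := Finset.card_le_univ _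
            _ = 4 := huniv4
        have hsc1 : 1 ≤ Sf.card := Finset.card_pos.mpr hSfne
        rcases (show Sf.card = 1 ∨ Sf.card = 2 ∨ Sf.card = 3 ∨ Sf.card = 4 by omega)
          with hS | hS | hS | hS
        · -- |Sf| = 1 : all cross classes are pairs, at most two of them
          obtain ⟨v1, hv1, hi1, hd1⟩ := f_conn {0} h0ne h0nu
          have hcr1 : 2 ≤ (Rv v1).card := c_cross2 hi1 hd1
          have hg1 := hgrow v1 hv1 hcr1 (hcrossne v1 hv1 hcr1)
          have he1 := f_exc1 v1 hv1
          have hc1 : (Rv v1).card = 2 := by omega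
          by_cases h2c : ∃ v2 ∈ V, 2 ≤ (Rv v2).card ∧ v2 ≠ v1
          · obtain ⟨v2, hv2, hcr2, hnev⟩ := h2c
            have hg2 := hgrow v2 hv2 hcr2 (hcrossne v2 hv2 hcr2)
            have he12 := f_exc2 v2 hv2 v1 hv1 hnev
            have hc2 : (Rv v2).card = 2 := by omega
            apply no_conn_pair2 V Rv f_conn (Rv v1) (Rv v2) hc1 (le_of_eq hc2)
            intro v hv
            by_cases hcc : 2 ≤ (Rv v).card
            · have hv12 : v = v1 ∨ v = v2 := by
                by_contra hvno
                push_neg at hvno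
                have hgv := hgrow v hv hcc (hcrossne v hv hcc)
                have := f_exc3 v hv v1 hv1 v2 hv2 hvno.1 hvno.2 hnev.symm
                omega
              rcases hv12 with rfl | rfl
              · right; left; exact Finset.Subset.refl _
              · right; right; exact Finset.Subset.refl _
            · left; omega
          · push_neg at h2c
            apply no_conn_sub V Rv f_conn (Rv v1) (Finset.card_pos.mp (by omega))
              (by intro he; rw [he, huniv4] at hc1; omega)
            intro v hv
            by_cases hcc : 2 ≤ (Rv v).card
            · right; rw [h2c v hv hcc]
            · left; omega
        · -- |Sf| = 2
          by_cases hX : ∃ X ∈ V, 2 ≤ (Rv X).card ∧ Rv X ≠ Sf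
          · obtain ⟨X, hXV, hXcr, hXne⟩ := hX
            have hgX := hgrow X hXV hXcr (hcrossne X hXV hXcr)
            have heX := f_exc1 X hXV
            have hXgt : 2 < (Rv X).card := by
              have hss : Sf ⊂ Rv X := Finset.ssubset_iff_subset_ne.mpr ⟨hgX.1, fun h => hXne h.symm⟩
              have := Finset.card_lt_card hss
              omega
            have hm4 := c_cardR4 X
            have hXc3 : (Rv X).card = 3 := by omega
            have hothers : ∀ v ∈ V, v ≠ X → Sz v = 2 := by
              intro v hv hne
              have h1 := f_exc2 v hv X hXV hne
              have h2 := f_mult v hv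
              omega
            apply no_conn_sub V Rv f_conn (Rv X) (Finset.card_pos.mp (by omega))
              (by intro he; rw [he, huniv4] at hXc3; omega)
            intro v hv
            by_cases hcc : 2 ≤ (Rv v).card
            · by_cases hvX : v = X
              · right; rw [hvX]
              · right
                have hvne := hcrossne v hv hcc
                have hgv := hgrow v hv hcc hvne
                have hc2' : (Rv v).card = 2 :=
                  le_antisymm ((hothers v hv hvX) ▸ f_cardR v) hcc
                have hveq : Sf = Rv v := Finset.eq_of_subset_of_card_le hgv.1 (by omega)
                rw [← hveq]
                exact hgX.1
            · left; omega
          · push_neg at hX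
            apply no_conn_sub V Rv f_conn Sf hSfne
              (by intro he; rw [he, huniv4] at hS; omega)
            intro v hv
            by_cases hcc : 2 ≤ (Rv v).card
            · right; rw [hX v hv hcc]
            · left; omega
        · -- |Sf| = 3
          have hall : ∀ v ∈ V, 2 ≤ (Rv v).card → Rv v = Sf := by
            intro v hv hcc
            have hgv := hgrow v hv hcc (hcrossne v hv hcc)
            have hev := f_exc1 v hv
            have hcv := c_cardR4 v
            have hcle := Finset.card_le_card hgv.1
            have : (Rv v).card = 3 := by omega
            exact (Finset.eq_of_subset_of_card_le hgv.1 (by omega)).symm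
          apply no_conn_sub V Rv f_conn Sf hSfne
            (by intro he; rw [he, huniv4] at hS; omega)
          intro v hv
          by_cases hcc : 2 ≤ (Rv v).card
          · right; rw [hall v hv hcc]
          · left; omega
        · -- |Sf| = 4 : parity contradiction
          obtain ⟨X, hXV, hiX, hdX⟩ := f_conn {0} h0ne h0nu
          have hXcr : 2 ≤ (Rv X).card := c_cross2 hiX hdX
          have hgX := hgrow X hXV hXcr (hcrossne X hXV hXcr)
          have heX := f_exc1 X hXV
          have hm4 := c_cardR4 X
          have hcle := Finset.card_le_card hgX.1
          have hcX : (Rv X).card = 4 := by omega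
          have hSzX : Sz X = 4 := by omega
          have hRXu : Rv X = univ :=
            Finset.eq_of_subset_of_card_le (Finset.subset_univ _) (by rw [huniv4, hcX])
          have hcnt1 : ∀ m, cnt m X = 1 := by
            intro m
            have hmem : m ∈ Rv X := by rw [hRXu]; exact Finset.mem_univ m
            have h1 : 1 ≤ cnt m X := (f_Rv m X).mp hmem
            by_contra hm
            have h2 : 2 ≤ cnt m X := by omega
            have hsum : ∑ m' ∈ Rv X, cnt m' X = 4 := by rw [f_RS, hSzX]
            rw [← Finset.add_sum_erase _ _ hmem] at hsum
            have hcarde : ((Rv X).erase m).card = 3 := by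
              rw [Finset.card_erase_of_mem hmem, hcX]
            have herase : 3 ≤ ∑ m' ∈ (Rv X).erase m, cnt m' X := by
              calc 3 = ∑ _m' ∈ (Rv X).erase m, 1 := by rw [Finset.sum_const, hcarde]; simp
                _ ≤ _ := Finset.sum_le_sum
                    (fun m' hm' => (f_Rv m' X).mp (Finset.mem_of_mem_erase hm'))
            omega
          have hothers : ∀ v ∈ V, v ≠ X → cnt 0 v = 0 ∨ cnt 0 v = 2 := by
            intro v hv hne
            have hsz2 : Sz v = 2 := by
              have h1 := f_exc2 v hv X hXV hne
              have h2 := f_mult v hv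
              omega
            have hnc : (Rv v).card ≤ 1 := by
              by_contra hcc
              push_neg at hcc
              have hgv := hgrow v hv hcc (hcrossne v hv hcc)
              have := Finset.card_le_card hgv.1
              have := c_cardR4 v
              omega
            have hc0le : cnt 0 v ≤ Sz v := by
              rw [hSz]
              exact Finset.single_le_sum (f := fun m => cnt m v)
                (fun _ _ => Nat.zero_le _) (Finset.mem_univ 0)
            by_contra hc
            push_neg at hc
            have h1 : cnt 0 v = 1 := by omega
            have hsplit : cnt 0 v + ∑ m ∈ (univ : Finset (Fin 4)).erase 0, cnt m v = Sz v := by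
              rw [hSz]
              show cnt 0 v + ∑ m ∈ (univ : Finset (Fin 4)).erase 0, cnt m v
                  = ∑ m : Fin 4, cnt m v
              exact Finset.add_sum_erase univ (fun m => cnt m v) (Finset.mem_univ (0 : Fin 4))
            have hrest : ∑ m ∈ (univ : Finset (Fin 4)).erase 0, cnt m v ≠ 0 := by omega
            obtain ⟨m', hm', hcm'⟩ := Finset.exists_ne_zero_of_sum_ne_zero hrest
            have hm'0 : m' ≠ 0 := Finset.ne_of_mem_erase hm'
            have hmem1 : (0 : Fin 4) ∈ Rv v := (f_Rv 0 v).mpr (by omega)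
            have hmem2 : m' ∈ Rv v := (f_Rv m' v).mpr (by omega)
            have : 2 ≤ (Rv v).card := Finset.one_lt_card.mpr ⟨0, hmem1, m', hmem2, (Ne.symm hm'0)⟩
            omega
          have hp0 : ∑ v ∈ V, cnt 0 v = p := f_rowsum 0
          rw [← Finset.add_sum_erase _ _ hXV] at hp0
          have heven : Even (∑ v ∈ V.erase X, cnt 0 v) := by
            apply Finset.even_sum
            intro v hv
            rcases hothers v (Finset.mem_of_mem_erase hv) (Finset.ne_of_mem_erase hv)
              with h | h <;> simp [h]
          rw [hcnt1 0] at hp0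
          obtain ⟨c, hcc⟩ := heven
          obtain ⟨d, hd⟩ := hpe
          omega
    · -- t = 2p : need three independent columns
      have hall2 : ∀ v ∈ V, Sz v = 2 := by
        intro v hv
        have h1 := f_exc1 v hv
        have h2 := f_mult v hv
        omega
      have hpair : ∀ v ∈ V, 2 ≤ (Rv v).card → (Rv v).card = 2 ∧ ∀ m ∈ Rv v, sgn m v ≠ 0 := by
        intro v hv hcr
        have hszv := hall2 v hv
        have hcard2 : (Rv v).card = 2 := le_antisymm (by rw [← hszv]; exact f_cardR v) hcr
        refine ⟨hcard2, ?_⟩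
        intro m hm
        apply c_cnt1_sgn m v
        have h1 : 1 ≤ cnt m v := (f_Rv m v).mp hm
        have hsum : ∑ m' ∈ Rv v, cnt m' v = 2 := by rw [f_RS v, hszv]
        rw [← Finset.add_sum_erase _ _ hm] at hsum
        have hcarde : ((Rv v).erase m).card = 1 := by
          rw [Finset.card_erase_of_mem hm, hcard2]
        have herase : 1 ≤ ∑ m' ∈ (Rv v).erase m, cnt m' v := by
          calc 1 = ∑ _m' ∈ (Rv v).erase m, 1 := by rw [Finset.sum_const, hcarde]; simp
            _ ≤ _ := Finset.sum_le_sum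
                (fun m' hm' => (f_Rv m' v).mp (Finset.mem_of_mem_erase hm'))
        omega
      obtain ⟨v1, hv1, hi1, hd1⟩ := f_conn {0} h0ne h0nu
      obtain ⟨hc1, hs1⟩ := hpair v1 hv1 (c_cross2 hi1 hd1)
      have hA2ne : (Rv v1).Nonempty := Finset.card_pos.mp (by omega)
      have hA2nu : Rv v1 ≠ univ := by
        intro he; rw [he, huniv4] at hc1; omega
      obtain ⟨v2, hv2, hi2, hd2⟩ := f_conn (Rv v1) hA2ne hA2nu
      obtain ⟨hc2, hs2⟩ := hpair v2 hv2 (c_cross2 hi2 hd2)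
      obtain ⟨x2, hx2⟩ := hi2
      obtain ⟨b2, hb2⟩ := hd2
      rw [Finset.mem_inter] at hx2
      rw [Finset.mem_sdiff] at hb2
      have hne2 : x2 ≠ b2 := fun h => hb2.2 (h ▸ hx2.2)
      have hR2eq : ({x2, b2} : Finset (Fin 4)) = Rv v2 := by
        apply Finset.eq_of_subset_of_card_le
        · intro y hy
          rcases Finset.mem_insert.mp hy with rfl | hy
          · exact hx2.1
          · rw [Finset.mem_singleton] at hy; exact hy ▸ hb2.1
        · rw [Finset.card_pair hne2]
          omega
      set A3 : Finset (Fin 4) := insert b2 (Rv v1) with hA3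
      have hA3c : A3.card = 3 := by
        rw [hA3, Finset.card_insert_of_notMem hb2.2, hc1]
      have hRv2A3 : Rv v2 ⊆ A3 := by
        rw [← hR2eq, hA3]
        intro y hy
        rcases Finset.mem_insert.mp hy with rfl | hy
        · exact Finset.mem_insert_of_mem hx2.2
        · rw [Finset.mem_singleton] at hy
          exact hy ▸ Finset.mem_insert_self _ _
      have hRv1A3 : Rv v1 ⊆ A3 := by rw [hA3]; exact Finset.subset_insert _ _
      have hA3ne : A3.Nonempty := Finset.card_pos.mp (by omega)
      have hA3nu : A3 ≠ univ := by
        intro he; rw [he, huniv4] at hA3c; omega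
      obtain ⟨v3, hv3, hi3, hd3⟩ := f_conn A3 hA3ne hA3nu
      obtain ⟨hc3, hs3⟩ := hpair v3 hv3 (c_cross2 hi3 hd3)
      obtain ⟨b3, hb3⟩ := hd3
      rw [Finset.mem_sdiff] at hb3
      obtain ⟨a1, ha1⟩ := hA2ne
      have hnotR : ∀ {w : ℤ} {m : Fin 4}, m ∉ Rv w → colQ w m = 0 := by
        intro w m hm
        rw [c_colne]
        apply f_cnt0
        rw [f_Rv] at hm
        omega
      have hz31 : colQ v1 b3 = 0 := hnotR (fun h => hb3.2 (hRv1A3 h))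
      have hz32 : colQ v2 b3 = 0 := hnotR (fun h => hb3.2 (hRv2A3 h))
      have hz21 : colQ v1 b2 = 0 := hnotR hb2.2
      have hnz3 : colQ v3 b3 ≠ 0 := by
        rw [Ne, c_colne]; exact hs3 b3 hb3.1
      have hnz2 : colQ v2 b2 ≠ 0 := by
        rw [Ne, c_colne]; exact hs2 b2 hb2.1
      have hnz1 : colQ v1 a1 ≠ 0 := by
        rw [Ne, c_colne]; exact hs1 a1 ha1
      refine ⟨3, ![colQ v1, colQ v2, colQ v3], ?_, ?_, by omega⟩
      · rw [Fintype.linearIndependent_iff]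
        intro g hg
        rw [Fin.sum_univ_three] at hg
        simp only [Matrix.cons_val_zero, Matrix.cons_val_one, Matrix.head_cons,
          Matrix.cons_val_two, Matrix.tail_cons] at hg
        have h3' := congrFun hg b3
        simp only [Pi.add_apply, Pi.smul_apply, smul_eq_mul, Pi.zero_apply, hz31, hz32,
          mul_zero, zero_add, add_zero] at h3'
        have hg2 : g 2 = 0 := by
          rcases mul_eq_zero.mp h3' with h | h
          · exact h
          · exact absurd h hnz3
        have h2' := congrFun hg b2
        rw [hg2] at h2'
        simp only [Pi.add_apply, Pi.smul_apply, smul_eq_mul, Pi.zero_apply, hz21,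
          mul_zero, zero_mul, zero_add, add_zero] at h2'
        have hg1 : g 1 = 0 := by
          rcases mul_eq_zero.mp h2' with h | h
          · exact h
          · exact absurd h hnz2
        have h1' := congrFun hg a1
        rw [hg1, hg2] at h1'
        simp only [Pi.add_apply, Pi.smul_apply, smul_eq_mul, Pi.zero_apply,
          mul_zero, zero_mul, zero_add, add_zero] at h1'
        have hg0 : g 0 = 0 := by
          rcases mul_eq_zero.mp h1' with h | h
          · exact h
          · exact absurd h hnz1
        intro i
        fin_cases i <;> assumption
      · intro i
        fin_cases i
        · simpa using c_colmem v1 hv1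
        · simpa using c_colmem v2 hv2
        · simpa using c_colmem v3 hv3
  -- kernel dimension bound
  have hKdim : Module.finrank ℚ (LinearMap.ker Mx.mulVecLin) ≤ 2*p - 3 := by
    have := ker_dim_bound Mx r fam hind hmem
    rw [Fintype.card_coe] at this
    omega
  obtain ⟨S, hScard, hSdet⟩ := proj_coords (2*p-3) (LinearMap.ker Mx.mulVecLin) hKdim
  -- representatives
  set rep : ℤ → Fin 4 × Fin p := fun v =>
    if h : ∃ a : Fin 4 × Fin p, J₀ a.1 a.2 = v then h.choose else ⟨0, ⟨0, by omega⟩⟩ with hrepdef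
  have hrep : ∀ v ∈ V, J₀ (rep v).1 (rep v).2 = v := by
    intro v hv
    rw [hVdef] at hv
    obtain ⟨a, -, ha⟩ := Finset.mem_image.mp hv
    have hex : ∃ a : Fin 4 × Fin p, J₀ a.1 a.2 = v := ⟨a, ha⟩
    rw [hrepdef]
    simp only [dif_pos hex]
    exact hex.choose_spec
  -- the coordinate list
  set L := S.toList with hL
  have hLlen : L.length ≤ 2*p - 3 := by rw [hL, Finset.length_toList]; exact hScard
  set u : Fin (2*p - 3) → Fin 4 × Fin p := fun i =>
    if h : (i : ℕ) < L.length then rep (L.get ⟨i, h⟩).1 else ⟨0, ⟨0, by omega⟩⟩ with hudef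
  have hu : ∀ x ∈ S, ∃ i : Fin (2*p - 3), u i = rep x.1 := by
    intro x hx
    have hxL : x ∈ L := by rw [hL]; exact Finset.mem_toList.mpr hx
    obtain ⟨j, hj⟩ := List.mem_iff_get.mp hxL
    have hjlt : (j : ℕ) < 2*p - 3 := lt_of_lt_of_le j.2 hLlen
    refine ⟨⟨j, hjlt⟩, ?_⟩
    rw [hudef]
    simp only [dif_pos (show ((⟨(j:ℕ), hjlt⟩ : Fin (2*p-3)) : ℕ) < L.length from j.2)]
    show rep (L.get ⟨(j : ℕ), j.2⟩).1 = rep x.1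
    rw [Fin.eta, hj]
  refine ⟨u, ?_⟩
  intro J J' hJs hJ's hpJ hpJ' hagree
  set D : ℤ → ℤ := fun v => J (rep v).1 (rep v).2 - J' (rep v).1 (rep v).2 with hD
  have d1 : ∀ a : Fin 4 × Fin p, J a.1 a.2 - J' a.1 a.2 = D (J₀ a.1 a.2) := by
    intro a
    have hv := hmemV a.1 a.2
    have h0 : J₀ (rep (J₀ a.1 a.2)).1 (rep (J₀ a.1 a.2)).2 = J₀ a.1 a.2 := hrep _ hv
    have hJa : J (rep (J₀ a.1 a.2)).1 (rep (J₀ a.1 a.2)).2 = J a.1 a.2 :=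
      (hpJ _ a).mpr h0
    have hJ'a : J' (rep (J₀ a.1 a.2)).1 (rep (J₀ a.1 a.2)).2 = J' a.1 a.2 :=
      (hpJ' _ a).mpr h0
    rw [hD]
    simp only []
    rw [hJa, hJ'a]
  have d2 : ∀ m, ∑ v ∈ V, sgn m v * D v = 0 := by
    intro m
    have step1 : ∀ v ∈ V, sgn m v * D v
        = ∑ k ∈ univ.filter (fun k : Fin p => J₀ m k = v), (-1:ℤ)^((k:ℕ)+1) * D (J₀ m k) := by
      intro v _
      rw [hsgn]
      simp only []
      rw [Finset.sum_mul]
      apply Finset.sum_congr rfl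
      intro k hk
      rw [Finset.mem_filter] at hk
      rw [hk.2]
    rw [Finset.sum_congr rfl step1]
    rw [Finset.sum_fiberwise_of_maps_to (fun k _ => hmemV m k)]
    have : ∀ k : Fin p, (-1:ℤ)^((k:ℕ)+1) * D (J₀ m k)
        = (-1:ℤ)^((k:ℕ)+1) * J m k - (-1:ℤ)^((k:ℕ)+1) * J' m k := by
      intro k
      rw [← d1 (m, k), mul_sub]
    rw [Finset.sum_congr rfl (fun k _ => this k), Finset.sum_sub_distrib, hJs m, hJ's m,
      sub_zero]
  have hdK : (fun i : {x // x ∈ V} => (D i.1 : ℚ)) ∈ LinearMap.ker Mx.mulVecLin := by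
    rw [LinearMap.mem_ker]
    rw [Matrix.mulVecLin_apply]
    funext m
    show ∑ i : {x // x ∈ V}, Mx m i * (D i.1 : ℚ) = 0
    rw [hMx]
    simp only []
    have : ∑ i : {x // x ∈ V}, ((sgn m i.1 : ℚ)) * ((D i.1 : ℚ))
        = ((∑ v ∈ V, sgn m v * D v : ℤ) : ℚ) := by
      push_cast
      rw [← Finset.sum_coe_sort V (fun v => ((sgn m v : ℚ)) * ((D v : ℚ)))]
    rw [this, d2 m]
    norm_num
  have hvanish : ∀ i ∈ S, (fun i : {x // x ∈ V} => (D i.1 : ℚ)) i = 0 := by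
    intro i hi
    obtain ⟨idx, hidx⟩ := hu i hi
    have := hagree idx
    rw [hidx] at this
    simp only []
    rw [hD]
    simp only []
    rw [this]
    push_cast
    ring
  have hzero := hSdet _ hdK hvanish
  have hDzero : ∀ v ∈ V, D v = 0 := by
    intro v hv
    have := congrFun hzero ⟨v, hv⟩
    simp only [Pi.zero_apply] at this
    exact_mod_cast this
  funext m k
  have := d1 (m, k)
  have h0 : D (J₀ m k) = 0 := hDzero _ (hmemV m k)
  simp only [] at this
  omega

/-- `|B_{P₄}| = o(b_n^{2p-2})`: connected quadruples `(J¹,J²,J³,J⁴) ∈ (A_p)⁴`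
(no splitting of `{1,2,3,4}` into two nonempty groups whose coordinate
multisets are disjoint) in which every value of the combined multiset has
multiplicity at least `2`. -/
theorem count_B_P4_small_o (p : ℕ) (hp : 2 ≤ p) (hpe : Even p) :
    Tendsto (fun bn : ℕ =>
      (Nat.card {J : Fin 4 → (Fin p → ℤ) //
        (∀ m k, J m k ≠ 0 ∧ |J m k| ≤ (bn : ℤ)) ∧
        (∀ m, (∑ k : Fin p, (-1 : ℤ) ^ ((k : ℕ) + 1) * J m k) = 0) ∧
        (∀ s : Finset (Fin 4), s.Nonempty → s ≠ Finset.univ →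
          ∃ m ∈ s, ∃ m' ∈ Finset.univ \ s, ∃ (k l : Fin p), J m k = J m' l) ∧
        (∀ v : ℤ,
          (∑ m : Fin 4, (Finset.univ.filter (fun k : Fin p => J m k = v)).card) = 0 ∨
          2 ≤ ∑ m : Fin 4, (Finset.univ.filter (fun k : Fin p => J m k = v)).card)} : ℝ) /
        (bn : ℝ) ^ (2 * p - 2))
      atTop (nhds 0) := by
  classical
  set Bc : ℕ → (Fin 4 → Fin p → ℤ) → Prop := fun bn J =>
    (∀ m k, J m k ≠ 0 ∧ |J m k| ≤ (bn : ℤ)) ∧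
    (∀ m, (∑ k : Fin p, (-1 : ℤ) ^ ((k : ℕ) + 1) * J m k) = 0) ∧
    (∀ s : Finset (Fin 4), s.Nonempty → s ≠ Finset.univ →
      ∃ m ∈ s, ∃ m' ∈ Finset.univ \ s, ∃ (k l : Fin p), J m k = J m' l) ∧
    (∀ v : ℤ,
      (∑ m : Fin 4, (Finset.univ.filter (fun k : Fin p => J m k = v)).card) = 0 ∨
      2 ≤ ∑ m : Fin 4, (Finset.univ.filter (fun k : Fin p => J m k = v)).card) with hBc
  set C : ℕ := Fintype.card ((Fin 4 × Fin p) → (Fin 4 × Fin p) → Bool) with hC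
  have key : ∀ bn : ℕ, Nat.card {J : Fin 4 → Fin p → ℤ // Bc bn J}
      ≤ C * (2*bn+1)^(2*p-3) := by
    intro bn
    set pt : (Fin 4 → Fin p → ℤ) → ((Fin 4 × Fin p) → (Fin 4 × Fin p) → Bool) :=
      fun J a b => decide (J a.1 a.2 = J b.1 b.2) with hpt
    have hptiff : ∀ J J' : Fin 4 → Fin p → ℤ, pt J = pt J' →
        ∀ a b : Fin 4 × Fin p, (J a.1 a.2 = J b.1 b.2 ↔ J' a.1 a.2 = J' b.1 b.2) := by
      intro J J' h a b
      have h1 := congrFun (congrFun h a) b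
      rw [hpt] at h1
      simpa using decide_eq_decide.mp h1
    have hch : ∀ P : (Fin 4 × Fin p) → (Fin 4 × Fin p) → Bool,
        ∃ u : Fin (2*p-3) → Fin 4 × Fin p,
        ∀ J J' : Fin 4 → Fin p → ℤ, Bc bn J → Bc bn J' → pt J = P → pt J' = P →
          (∀ i, J (u i).1 (u i).2 = J' (u i).1 (u i).2) → J = J' := by
      intro P
      by_cases hP : ∃ J₀ : Fin 4 → Fin p → ℤ, Bc bn J₀ ∧ pt J₀ = P
      · obtain ⟨J₀, hJ₀, hJ₀P⟩ := hP
        obtain ⟨u, hu⟩ := exists_det_coords p hp hpe J₀ hJ₀.2.2.1 hJ₀.2.2.2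
        refine ⟨u, ?_⟩
        intro J J' hJ hJ' hJP hJ'P hagree
        exact hu J J' hJ.2.1 hJ'.2.1
          (hptiff J J₀ (hJP.trans hJ₀P.symm))
          (hptiff J' J₀ (hJ'P.trans hJ₀P.symm)) hagree
      · exact ⟨fun _ => ⟨0, ⟨0, by omega⟩⟩,
          fun J J' hJ hJ' hJP hJ'P _ => absurd ⟨J, hJ, hJP⟩ hP⟩
    choose u hu using hch
    set F : {J : Fin 4 → Fin p → ℤ // Bc bn J} →
        ((Fin 4 × Fin p) → (Fin 4 × Fin p) → Bool) × (Fin (2*p-3) → ↥(Finset.Icc (-(bn:ℤ)) bn)) :=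
      fun J => (pt J.1, fun i => ⟨J.1 (u (pt J.1) i).1 (u (pt J.1) i).2, by
        rw [Finset.mem_Icc, ← abs_le]
        exact (J.2.1 (u (pt J.1) i).1 (u (pt J.1) i).2).2⟩) with hF
    have hinj : Function.Injective F := by
      rintro ⟨J, hJ⟩ ⟨J', hJ'⟩ hFF
      rw [hF, Prod.mk.injEq] at hFF
      apply Subtype.ext
      apply hu (pt J) J J' hJ hJ' rfl hFF.1.symm
      intro i
      have h2 := congrFun hFF.2 i
      have h3 := congrArg Subtype.val h2
      simp only [] at h3
      rw [← hFF.1] at h3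
      exact h3
    have hle := Nat.card_le_card_of_injective F hinj
    have hle2 : Nat.card {J : Fin 4 → Fin p → ℤ // Bc bn J}
        ≤ Fintype.card (((Fin 4 × Fin p) → (Fin 4 × Fin p) → Bool)
          × (Fin (2*p-3) → ↥(Finset.Icc (-(bn:ℤ)) bn))) := by
      rw [← Nat.card_eq_fintype_card]
      exact hle
    have hcard : Fintype.card (((Fin 4 × Fin p) → (Fin 4 × Fin p) → Bool)
        × (Fin (2*p-3) → ↥(Finset.Icc (-(bn:ℤ)) bn))) = C * (2*bn+1)^(2*p-3) := by
      rw [Fintype.card_prod, Fintype.card_fun]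
      simp [hC, Int.card_Icc]
      congr 1
      omega
    rw [hcard] at hle2
    exact hle2
  -- limit
  have hq : 2*p - 2 = (2*p - 3) + 1 := by omega
  apply squeeze_zero' (g := fun n : ℕ => ((C * 3^(2*p-3) : ℕ) : ℝ) / n)
  · filter_upwards with n
    positivity
  · filter_upwards [eventually_ge_atTop 1] with n hn
    have hn0 : (0 : ℝ) < (n : ℝ) := by exact_mod_cast hn
    have hn1 : (1 : ℝ) ≤ (n : ℝ) := by exact_mod_cast hn
    have h1 : (Nat.card {J : Fin 4 → Fin p → ℤ // Bc n J} : ℝ) ≤ (C : ℝ) * (2*n+1)^(2*p-3) := by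
      have := key n
      calc (Nat.card {J : Fin 4 → Fin p → ℤ // Bc n J} : ℝ)
          ≤ ((C * (2*n+1)^(2*p-3) : ℕ) : ℝ) := by exact_mod_cast this
        _ = (C : ℝ) * (2*(n:ℝ)+1)^(2*p-3) := by push_cast; ring
    calc (Nat.card {J : Fin 4 → Fin p → ℤ // Bc n J} : ℝ) / (n:ℝ)^(2*p-2)
        ≤ ((C:ℝ) * (2*(n:ℝ)+1)^(2*p-3)) / (n:ℝ)^(2*p-2) := by
          apply div_le_div_of_nonneg_right h1 (by positivity) |>.trans_eq rfl
      _ ≤ ((C:ℝ) * (3*(n:ℝ))^(2*p-3)) / (n:ℝ)^(2*p-2) := by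
          gcongr
          · linarith
      _ = ((C * 3^(2*p-3) : ℕ) : ℝ) / n := by
          rw [hq, pow_succ, mul_pow]
          push_cast
          field_simp
  · exact tendsto_const_div_atTop_nhds_zero_nat _
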